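/- Let s be a primitive string of length n ≥ 2 over Σ and let π be a local ordering family (of order 1). For a row index i of M*(s), let x2 = F[i] be the first symbol of row i, x1 = L[i] its last symbol, and r = #{ j : j ≤ i, j ∈ Rng(x2), and L[j] = x1 }. Then the right cyclic shift of row i (its last symbol moved to the front) is exactly row number b + r − 1 of M*(s), where b = min Rng(x1x2). -/

import Mathlib

/-- The cyclic rotation of `s` by `r`: `s[r+1..n] s[1..r]`. -/
def rot {α : Type*} (s : List α) (r : ℕ) : List α := s.drop r ++ s.take r

/-- A string is primitive if its cyclic rotations are pairwise distinct. -/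
def IsPrimitive {α : Type*} (s : List α) : Prop :=
  ∀ r₁ r₂ : ℕ, r₁ < s.length → r₂ < s.length → rot s r₁ = rot s r₂ → r₁ = r₂

/-- The context adaptive order induced by a family `π` of linear orders on the
alphabet, one for each string (context): `u ≺ v` iff, `x = u[1..k] = v[1..k]`
being the longest common prefix of `u` and `v`, the symbol `u[k+1]` is
`π x`-smaller than `v[k+1]`. -/
def caLt {α : Type*} (π : List α → LinearOrder α) (u v : List α) : Prop :=
  ∃ (k : ℕ) (hu : k < u.length) (hv : k < v.length),
    u.take k = v.take k ∧ (π (u.take k)).lt (u.get ⟨k, hu⟩) (v.get ⟨k, hv⟩)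

/-- The matrix `M*(s)`: an enumeration of the cyclic rotations of `s`
listed in `≺`-increasing order; the `i`-th row is `row i`. -/
structure SortedRotMatrix {α : Type*} (π : List α → LinearOrder α) (s : List α) where
  row : Fin s.length → List α
  row_is_rot : ∀ i, ∃ r : Fin s.length, row i = rot s (r : ℕ)
  rot_is_row : ∀ r : Fin s.length, ∃ i, row i = rot s (r : ℕ)
  sorted : ∀ i j : Fin s.length, i < j → caLt π (row i) (row j)

/-- `Rng M x`: the set of row indices of `M*(s)` whose row has `x` as a prefix. -/
def Rng {α : Type*} [DecidableEq α] {π : List α → LinearOrder α} {s : List α}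
    (M : SortedRotMatrix π s) (x : List α) : Finset (Fin s.length) :=
  Finset.univ.filter (fun i => x <+: M.row i)

/-- `π` is a local ordering family (of order 1): the order `π x` depends only on
the last symbol of `x` (for nonempty `x`). -/
def IsLocalOrdering {α : Type*} (π : List α → LinearOrder α) : Prop :=
  ∀ x y : List α, x ≠ [] → y ≠ [] → x.getLast? = y.getLast? →
    ∀ a b : α, (π x).lt a b ↔ (π y).lt a b

/-- The right cyclic shift of `w`: its last symbol moved to the front. -/
def rshift {α : Type*} (w : List α) : List α := rot w (w.length - 1)

/-! ### Auxiliary lemmas -/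

lemma rot_length {α : Type*} (s : List α) (r : ℕ) : (rot s r).length = s.length := by
  simp [rot]; omega

lemma rot_eq_rotate {α : Type*} (s : List α) (r : ℕ) (h : r ≤ s.length) :
    rot s r = s.rotate r := (List.rotate_eq_drop_append_take h).symm

lemma rshift_eq_cons {α : Type*} (w : List α) (h : w ≠ []) :
    rshift w = w.getLast h :: w.dropLast := by
  obtain ⟨l, a, rfl⟩ : ∃ l a, w = l ++ [a] :=
    ⟨w.dropLast, w.getLast h, (w.dropLast_append_getLast h).symm⟩
  simp [rshift, rot, List.take_left, List.drop_left, List.getLast_append,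
    List.dropLast_concat]

lemma mod_arith (n r : ℕ) (h : r < n) : ((r+1) % n + (n-1)) % n = r := by
  rcases Nat.lt_or_ge (r+1) n with h1 | h1
  · rw [Nat.mod_eq_of_lt h1]
    have : r + 1 + (n-1) = r + n := by omega
    rw [this, Nat.add_mod_right, Nat.mod_eq_of_lt h]
  · have : r + 1 = n := by omega
    rw [this, Nat.mod_self, Nat.zero_add, Nat.mod_eq_of_lt (by omega)]
    omega

lemma rshift_rot {α : Type*} (s : List α) (r : ℕ) (h : r < s.length) :
    rshift (rot s ((r+1) % s.length)) = rot s r := by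
  have hn : 0 < s.length := by omega
  have hr' : (r+1) % s.length < s.length := Nat.mod_lt _ hn
  have hw : rot s ((r+1) % s.length) = s.rotate ((r+1) % s.length) :=
    rot_eq_rotate _ _ (le_of_lt hr')
  have hlen : (rot s ((r+1) % s.length)).length = s.length := rot_length s _
  rw [rshift, hlen, hw, rot_eq_rotate _ _ (by rw [List.length_rotate]; omega),
    List.rotate_rotate, ← List.rotate_mod, mod_arith _ _ h,
    ← rot_eq_rotate _ _ (le_of_lt h)]

lemma lo_irrefl {α : Type*} (L : LinearOrder α) (a : α) : ¬ L.lt a a := by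
  letI := L; exact lt_irrefl a

lemma lo_asymm {α : Type*} (L : LinearOrder α) {a b : α} (h1 : L.lt a b) (h2 : L.lt b a) :
    False := by letI := L; exact absurd h2 (lt_asymm h1)

lemma get_eq_of_take_eq {α : Type*} {u v : List α} {m k : ℕ} (h : u.take m = v.take m)
    (hk : k < m) (hu : k < u.length) (hv : k < v.length) :
    u.get ⟨k, hu⟩ = v.get ⟨k, hv⟩ := by
  have hu' : k < (u.take m).length := by simp; omega
  have hv' : k < (v.take m).length := by simp; omega
  have h1 : (u.take m)[k]'hu' = (v.take m)[k]'hv' := List.getElem_of_eq h _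
  simpa [List.getElem_take] using h1

lemma caLt_irrefl {α : Type*} (π : List α → LinearOrder α) (u : List α) :
    ¬ caLt π u u := by
  rintro ⟨k, hu, hv, -, hlt⟩
  exact lo_irrefl _ _ hlt

lemma caLt_asymm {α : Type*} (π : List α → LinearOrder α) {u v : List α}
    (h1 : caLt π u v) (h2 : caLt π v u) : False := by
  obtain ⟨k1, hu1, hv1, ht1, hlt1⟩ := h1
  obtain ⟨k2, hv2, hu2, ht2, hlt2⟩ := h2
  rcases lt_trichotomy k1 k2 with h | h | h
  · have := get_eq_of_take_eq ht2 h hv1 hu1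
    rw [← this] at hlt1
    exact lo_irrefl _ _ hlt1
  · subst h
    rw [ht1] at hlt1
    exact lo_asymm _ hlt1 hlt2
  · have := get_eq_of_take_eq ht1 h hu2 hv2
    rw [← this] at hlt2
    exact lo_irrefl _ _ hlt2

lemma getLast?_cons_of_ne_nil {α : Type*} (a : α) {l : List α} (h : l ≠ []) :
    (a :: l).getLast? = l.getLast? := by
  cases l with
  | nil => exact absurd rfl h
  | cons b t => exact List.getLast?_cons_cons

lemma getElem_congr_idx' {α : Type*} (l : List α) {i j : ℕ} (h : i = j)
    (hi : i < l.length) (hj : j < l.length) : l[i]'hi = l[j]'hj := by subst h; rfl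

lemma caLt_rshift {α : Type*} (π : List α → LinearOrder α) (hloc : IsLocalOrdering π)
    {u v : List α} (hlen : u.length = v.length) (h2 : 2 ≤ u.length)
    (hh : u.head? = v.head?) (hl : u.getLast? = v.getLast?)
    (h : caLt π u v) : caLt π (rshift u) (rshift v) := by
  obtain ⟨k, hku, hkv, ht, hlt⟩ := h
  have hu0 : u ≠ [] := List.ne_nil_of_length_pos (by omega)
  have hv0 : v ≠ [] := List.ne_nil_of_length_pos (by omega)
  have hhead : u.get ⟨0, by omega⟩ = v.get ⟨0, by omega⟩ := by
    have h1 := List.head?_eq_head hu0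
    have h2' := List.head?_eq_head hv0
    rw [h1, h2'] at hh
    simpa [List.head_eq_getElem, List.get_eq_getElem] using hh
  have hlast : u.get ⟨u.length - 1, by omega⟩ = v.get ⟨v.length - 1, by omega⟩ := by
    have h1 := List.getLast?_eq_getLast hu0
    have h2' := List.getLast?_eq_getLast hv0
    rw [h1, h2'] at hl
    simpa [List.getLast_eq_getElem, List.get_eq_getElem] using hl
  have hk1 : 1 ≤ k := by
    by_contra hk
    have : k = 0 := by omega
    subst this
    rw [hhead] at hlt
    exact lo_irrefl _ _ hlt
  have hk2 : k < u.length - 1 := by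
    by_contra hk
    have hkk : k = u.length - 1 := by omega
    subst hkk
    have heq : u.get ⟨u.length - 1, hku⟩ = v.get ⟨u.length - 1, hkv⟩ := by
      have h3 : v.get ⟨v.length - 1, by omega⟩ = v.get ⟨u.length - 1, hkv⟩ := by
        simp only [List.get_eq_getElem]
        exact getElem_congr_idx' v (by omega) _ _
      exact hlast.trans h3
    rw [heq] at hlt
    exact lo_irrefl _ _ hlt
  have hcu := rshift_eq_cons u hu0
  have hcv := rshift_eq_cons v hv0
  have hc : u.getLast hu0 = v.getLast hv0 := by
    rw [List.getLast?_eq_getLast hu0, List.getLast?_eq_getLast hv0] at hl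
    exact Option.some_injective _ hl
  have hlenr : (rshift u).length = u.length := by rw [rshift]; exact rot_length u _
  have hlenrv : (rshift v).length = v.length := by rw [rshift]; exact rot_length v _
  refine ⟨k + 1, by omega, by omega, ?_, ?_⟩
  · rw [hcu, hcv, List.take_succ_cons, List.take_succ_cons, hc,
      List.dropLast_eq_take, List.dropLast_eq_take, List.take_take,
      List.take_take, min_eq_left (by omega), min_eq_left (by omega), ht]
  · have hgu : (rshift u).get ⟨k+1, by omega⟩ = u.get ⟨k, hku⟩ := by
      simp only [List.get_eq_getElem]
      exact (List.getElem_of_eq hcu _).trans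
        (by simp only [List.getElem_cons_succ, List.dropLast_eq_take, List.getElem_take])
    have hgv : (rshift v).get ⟨k+1, by omega⟩ = v.get ⟨k, hkv⟩ := by
      simp only [List.get_eq_getElem]
      exact (List.getElem_of_eq hcv _).trans
        (by simp only [List.getElem_cons_succ, List.dropLast_eq_take, List.getElem_take])
    rw [hgu, hgv]
    have htake : (rshift u).take (k+1) = u.getLast hu0 :: u.take k := by
      rw [hcu, List.take_succ_cons, List.dropLast_eq_take, List.take_take,
        min_eq_left (by omega)]
    rw [htake]
    have hne : u.take k ≠ [] := by
      intro hcon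
      rw [List.take_eq_nil_iff] at hcon
      rcases hcon with h | h
      · omega
      · exact hu0 h
    rw [hloc (u.getLast hu0 :: u.take k) (u.take k) (by simp) hne
      (getLast?_cons_of_ne_nil _ hne)]
    exact hlt

lemma take2_between {α : Type*} (π : List α → LinearOrder α) {u v w : List α} {a b : α}
    (h2 : 2 ≤ v.length) (hu : [a,b] <+: u) (hw : [a,b] <+: w)
    (huv : caLt π u v) (hvw : caLt π v w) : [a,b] <+: v := by
  obtain ⟨tu, rfl⟩ := hu
  obtain ⟨tw, rfl⟩ := hw
  match v, h2 with
  | c :: d :: tv, _ =>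
  obtain ⟨k1, hku1, hkv1, ht1, hlt1⟩ := huv
  obtain ⟨k2, hkv2, hkw2, ht2, hlt2⟩ := hvw
  have hca : c = a := by
    by_contra hc
    have hk1 : k1 = 0 := by
      by_contra h
      have h0 : (0:ℕ) < k1 := by omega
      have := get_eq_of_take_eq ht1 h0 (by simp) (by simp)
      simp [List.get_eq_getElem] at this
      exact hc this.symm
    have hk2 : k2 = 0 := by
      by_contra h
      have h0 : (0:ℕ) < k2 := by omega
      have := get_eq_of_take_eq ht2 h0 (by simp) (by simp)
      simp [List.get_eq_getElem] at this
      exact hc this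
    subst hk1; subst hk2
    rw [List.take_zero] at hlt1 hlt2
    exact lo_asymm _ hlt1 hlt2
  subst hca
  have hdb : d = b := by
    by_contra hd
    have hk1 : k1 = 1 := by
      rcases Nat.lt_trichotomy k1 1 with h | h | h
      · interval_cases k1
        rw [List.take_zero] at hlt1
        simp [List.get_eq_getElem] at hlt1
      · exact h
      · exfalso
        have := get_eq_of_take_eq ht1 h (by simp) (by simp)
        simp [List.get_eq_getElem] at this
        exact hd this.symm
    have hk2 : k2 = 1 := by
      rcases Nat.lt_trichotomy k2 1 with h | h | h
      · interval_cases k2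
        rw [List.take_zero] at hlt2
        simp [List.get_eq_getElem] at hlt2
      · exact h
      · exfalso
        have := get_eq_of_take_eq ht2 h (by simp) (by simp)
        simp [List.get_eq_getElem] at this
        exact hd this
    subst hk1; subst hk2
    simp [List.get_eq_getElem] at hlt1 hlt2
    exact lo_asymm _ hlt1 hlt2
  subst hdb
  exact ⟨tv, rfl⟩

lemma singleton_prefix_iff {α : Type*} {w : List α} {a : α} :
    [a] <+: w ↔ w.head? = some a := by
  cases w with
  | nil => simp
  | cons c t =>
    simp [List.cons_prefix_cons, eq_comm]

lemma head?_dropLast_of_two_le {α : Type*} {w : List α} (h : 2 ≤ w.length) :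
    w.dropLast.head? = w.head? := by
  match w, h with
  | a :: b :: t, _ => simp

/-- LF-mapping for local orderings: for a row index `i` of `M*(s)` with first
symbol `x₂ = F[i]` and last symbol `x₁ = L[i]`, letting
`r = #{ j ≤ i : j ∈ Rng [x₂], L[j] = x₁ }` and `b = min (Rng [x₁x₂])`, the right
cyclic shift of row `i` is exactly row `b + r − 1` (written `j` with
`j + 1 = b + r`). -/
theorem rshift_row_index {α : Type*} [Fintype α] [Nonempty α] [DecidableEq α]
    (π : List α → LinearOrder α) (hloc : IsLocalOrdering π)
    (s : List α) (hn : 2 ≤ s.length) (hp : IsPrimitive s)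
    (M : SortedRotMatrix π s) (i : Fin s.length) (x1 x2 : α)
    (hx2 : (M.row i).head? = some x2) (hx1 : (M.row i).getLast? = some x1) :
    ∃ (hne : (Rng M [x1, x2]).Nonempty) (j : Fin s.length),
      M.row j = rshift (M.row i) ∧
      (j : ℕ) + 1 = ((Rng M [x1, x2]).min' hne : ℕ)
        + ((Rng M [x2]).filter
            (fun l => l ≤ i ∧ (M.row l).getLast? = some x1)).card := by
  classical
  -- basic facts
  have hrowlen : ∀ l : Fin s.length, (M.row l).length = s.length := by
    intro l
    obtain ⟨r, hr⟩ := M.row_is_rot l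
    rw [hr, rot_length]
  have hrowne : ∀ l : Fin s.length, M.row l ≠ [] := by
    intro l
    apply List.ne_nil_of_length_pos
    rw [hrowlen]; omega
  have hlt_of_caLt : ∀ a b : Fin s.length, caLt π (M.row a) (M.row b) → a < b := by
    intro a b h
    rcases lt_trichotomy a b with h' | h' | h'
    · exact h'
    · subst h'; exact absurd h (caLt_irrefl π _)
    · exact absurd (M.sorted b a h') (fun h2 => caLt_asymm π h h2)
  have hrow_inj : Function.Injective M.row := by
    intro a b h
    by_contra hne
    rcases lt_or_gt_of_ne hne with h' | h'
    · have := M.sorted a b h'; rw [h] at this; exact caLt_irrefl π _ this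
    · have := M.sorted b a h'; rw [h] at this; exact caLt_irrefl π _ this
  -- the LF map φ
  have hφex : ∀ l : Fin s.length, ∃ j, M.row j = rshift (M.row l) := by
    intro l
    obtain ⟨r, hr⟩ := M.row_is_rot l
    have hrlt : (r : ℕ) < s.length := r.isLt
    -- find r' with (r'+1) % s.length = r
    obtain ⟨r', hr'lt, hr'⟩ : ∃ r' : ℕ, r' < s.length ∧ ((r':ℕ)+1) % s.length = (r:ℕ) := by
      rcases Nat.eq_zero_or_pos (r : ℕ) with h0 | h0
      · exact ⟨s.length - 1, by omega, by rw [h0]; rw [show s.length - 1 + 1 = s.length by omega, Nat.mod_self]⟩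
      · exact ⟨(r:ℕ) - 1, by omega, by rw [show (r:ℕ) - 1 + 1 = (r:ℕ) by omega, Nat.mod_eq_of_lt hrlt]⟩
    obtain ⟨j, hj⟩ := M.rot_is_row ⟨r', hr'lt⟩
    refine ⟨j, ?_⟩
    rw [hj, hr]
    have := rshift_rot s r' hr'lt
    rw [hr'] at this
    exact this.symm
  choose φ hφ using hφex
  -- structure of the shifted row
  have hstruct : ∀ l : Fin s.length,
      M.row (φ l) = (M.row l).getLast (hrowne l) :: (M.row l).dropLast := by
    intro l
    rw [hφ l, rshift_eq_cons _ (hrowne l)]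
  -- membership characterizations
  have hmemS : ∀ l : Fin s.length,
      (l ∈ Rng M [x2] ∧ (M.row l).getLast? = some x1) ↔
      ((M.row l).head? = some x2 ∧ (M.row l).getLast? = some x1) := by
    intro l
    simp [Rng, singleton_prefix_iff]
  -- φ maps S into T
  have himg : ∀ l : Fin s.length, (M.row l).head? = some x2 →
      (M.row l).getLast? = some x1 → φ l ∈ Rng M [x1, x2] := by
    intro l hh hl
    have hlast : (M.row l).getLast (hrowne l) = x1 := by
      rw [List.getLast?_eq_getLast (hrowne l)] at hl
      exact Option.some_injective _ hl
    have hdl : (M.row l).dropLast.head? = some x2 := by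
      rw [head?_dropLast_of_two_le (by rw [hrowlen]; omega)]; exact hh
    simp only [Rng, Finset.mem_filter, Finset.mem_univ, true_and]
    rw [hstruct l, hlast]
    rw [List.cons_prefix_cons]
    exact ⟨rfl, singleton_prefix_iff.mpr hdl⟩
  -- every element of T is hit
  have hsurj : ∀ j : Fin s.length, j ∈ Rng M [x1, x2] →
      ∃ l : Fin s.length, (M.row l).head? = some x2 ∧
        (M.row l).getLast? = some x1 ∧ φ l = j := by
    intro j hj
    simp only [Rng, Finset.mem_filter, Finset.mem_univ, true_and] at hj
    obtain ⟨r, hr⟩ := M.row_is_rot j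
    have hrlt : (r : ℕ) < s.length := r.isLt
    have hlt' : ((r:ℕ)+1) % s.length < s.length := Nat.mod_lt _ (by omega)
    obtain ⟨l, hl⟩ := M.rot_is_row ⟨((r:ℕ)+1) % s.length, hlt'⟩
    have hshift : rshift (M.row l) = M.row j := by
      rw [hl, hr]
      exact rshift_rot s (r:ℕ) hrlt
    have hφl : φ l = j := hrow_inj (by rw [hφ l, hshift])
    have hs := hstruct l
    rw [hφl] at hs
    rw [hs, List.cons_prefix_cons] at hj
    obtain ⟨hx1', hx2'⟩ := hj
    rw [singleton_prefix_iff] at hx2'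
    refine ⟨l, ?_, ?_, hφl⟩
    · rw [← head?_dropLast_of_two_le (by rw [hrowlen]; omega)]
      exact hx2'
    · rw [List.getLast?_eq_getLast (hrowne l), hx1']
  -- φ is strictly monotone on S
  have hmono : ∀ l l' : Fin s.length,
      (M.row l).head? = some x2 → (M.row l).getLast? = some x1 →
      (M.row l').head? = some x2 → (M.row l').getLast? = some x1 →
      l < l' → φ l < φ l' := by
    intro l l' hh hl hh' hl' hlt
    apply hlt_of_caLt
    rw [hφ l, hφ l']
    apply caLt_rshift π hloc (by rw [hrowlen, hrowlen]) (by rw [hrowlen]; exact hn)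
      (by rw [hh, hh']) (by rw [hl, hl'])
    exact M.sorted l l' hlt
  -- i itself is in S
  have hiS : (M.row i).head? = some x2 ∧ (M.row i).getLast? = some x1 := ⟨hx2, hx1⟩
  set j := φ i with hjdef
  have hjT : j ∈ Rng M [x1, x2] := himg i hx2 hx1
  have hne : (Rng M [x1, x2]).Nonempty := ⟨j, hjT⟩
  refine ⟨hne, j, hφ i, ?_⟩
  set b := (Rng M [x1, x2]).min' hne with hbdef
  have hbT : b ∈ Rng M [x1, x2] := Finset.min'_mem _ _
  have hble : b ≤ j := Finset.min'_le _ _ hjT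
  -- interval property
  have hinterval : ∀ t : Fin s.length, b ≤ t → t ≤ j → t ∈ Rng M [x1, x2] := by
    intro t hbt htj
    rcases eq_or_lt_of_le hbt with h1 | h1
    · rw [← h1]; exact hbT
    rcases eq_or_lt_of_le htj with h2 | h2
    · rw [h2]; exact hjT
    simp only [Rng, Finset.mem_filter, Finset.mem_univ, true_and] at hbT hjT ⊢
    exact take2_between π (by rw [hrowlen]; exact hn) hbT hjT
      (M.sorted b t h1) (M.sorted t j h2)
  -- T.filter (≤ j) = Icc b j
  have hIcc : (Rng M [x1, x2]).filter (fun t => t ≤ j) = Finset.Icc b j := by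
    ext t
    simp only [Finset.mem_filter, Finset.mem_Icc]
    constructor
    · rintro ⟨ht, h2⟩
      exact ⟨Finset.min'_le _ _ ht, h2⟩
    · rintro ⟨h1, h2⟩
      exact ⟨hinterval t h1 h2, h2⟩
  -- the card bijection
  have hcard : ((Rng M [x2]).filter
      (fun l => l ≤ i ∧ (M.row l).getLast? = some x1)).card
      = ((Rng M [x1, x2]).filter (fun t => t ≤ j)).card := by
    apply Finset.card_nbij φ
    · intro l hl
      simp only [Finset.mem_coe, Finset.mem_filter, Rng, Finset.mem_univ, true_and,
        singleton_prefix_iff] at hl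
      obtain ⟨hh, hli, hgl⟩ := hl
      simp only [Finset.mem_coe, Finset.mem_filter]
      refine ⟨himg l hh hgl, ?_⟩
      rcases eq_or_lt_of_le hli with h1 | h1
      · rw [h1]
      · exact le_of_lt (hmono l i hh hgl hx2 hx1 h1)
    · intro l hl l' hl' heq
      simp only [Finset.coe_filter, Set.mem_setOf_eq, Rng, Finset.mem_filter,
        Finset.mem_univ, true_and, singleton_prefix_iff] at hl hl'
      by_contra hne'
      rcases lt_or_gt_of_ne hne' with h1 | h1
      · exact absurd heq (ne_of_lt (hmono l l' hl.1 hl.2.2 hl'.1 hl'.2.2 h1))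
      · exact absurd heq.symm (ne_of_lt (hmono l' l hl'.1 hl'.2.2 hl.1 hl.2.2 h1))
    · intro t ht
      simp only [Finset.coe_filter, Set.mem_setOf_eq, Finset.mem_filter] at ht
      obtain ⟨htT, htj⟩ := ht
      obtain ⟨l, hh, hgl, hφl⟩ := hsurj t htT
      refine ⟨l, ?_, hφl⟩
      simp only [Finset.coe_filter, Set.mem_setOf_eq, Rng, Finset.mem_filter,
        Finset.mem_univ, true_and, singleton_prefix_iff]
      refine ⟨hh, ?_, hgl⟩
      by_contra hli
      push_neg at hli
      have := hmono i l hx2 hx1 hh hgl hli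
      rw [hφl] at this
      exact absurd htj (not_le_of_gt this)
  rw [hcard, hIcc, Fin.card_Icc]
  have : (b : ℕ) ≤ (j : ℕ) := hble
  omega
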